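/- Let A be an associative unital ring and let U, D ∈ A satisfy DU + UD = 1. Then for all integers k ≥ 1 and l ≥ 0: (i) DU^k = ε(k)U^{k−1} + (−1)^k U^k D; (ii) D^k U = ε(k)D^{k−1} + (−1)^k U D^k; (iii) D^l U^{k+l} = U^k · ∏_{s=k+1}^{k+l} ((−1)^s UD + ε(s)); (iv) D^{k+l} U^l = (∏_{s=k+1}^{k+l} ((−1)^s UD + ε(s))) · D^k, where in (iii) and (iv) also k ≥ 0 is allowed and the factors of the products commute pairwise. -/
import Mathlib

section
variable {A : Type*} [Ring A]

private lemma eps_step (n : ℕ) :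
    (if Odd n then (1 : A) else 0) + (-1) ^ n = (if Odd (n+1) then (1 : A) else 0) := by
  rcases Nat.even_or_odd n with he | ho
  · simp [Nat.not_odd_iff_even.mpr he, he.neg_one_pow, he.add_one]
  · simp [ho, ho.neg_one_pow, Nat.not_odd_iff_even.mpr ho.add_one]

private lemma aux1 (U D : A) (h : D * U + U * D = 1) :
    ∀ k : ℕ, 1 ≤ k →
      D * U ^ k = (if Odd k then (1 : A) else 0) * U ^ (k - 1) + (-1) ^ k * (U ^ k * D) := by
  have hDU : D * U = 1 - U * D := eq_sub_of_add_eq h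
  intro k hk
  induction k with
  | zero => omega
  | succ n ih =>
    rcases Nat.eq_zero_or_pos n with rfl | hn
    · simpa [sub_eq_add_neg] using hDU
    · have e1 : n - 1 + 1 = n := Nat.sub_add_cancel hn
      calc D * U ^ (n+1) = (D * U ^ n) * U := by rw [pow_succ, ← mul_assoc]
        _ = ((if Odd n then (1 : A) else 0) * U ^ (n - 1) + (-1) ^ n * (U ^ n * D)) * U := by
            rw [ih hn]
        _ = (if Odd n then (1 : A) else 0) * U ^ n + (-1) ^ n * (U ^ n * (D * U)) := by
            rw [add_mul, mul_assoc, mul_assoc, mul_assoc, ← pow_succ, e1]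
        _ = (if Odd n then (1 : A) else 0) * U ^ n + (-1) ^ n * (U ^ n * (1 - U * D)) := by
            rw [hDU]
        _ = ((if Odd n then (1 : A) else 0) + (-1) ^ n) * U ^ n
              + (-1) ^ (n+1) * (U ^ (n+1) * D) := by
            rw [pow_succ (-1 : A), pow_succ U]; noncomm_ring
        _ = (if Odd (n+1) then (1 : A) else 0) * U ^ (n+1-1) + (-1) ^ (n+1) * (U ^ (n+1) * D) := by
            rw [eps_step, Nat.add_sub_cancel]

private lemma aux2 (U D : A) (h : D * U + U * D = 1) :
    ∀ k : ℕ, 1 ≤ k →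
      D ^ k * U = (if Odd k then (1 : A) else 0) * D ^ (k - 1) + (-1) ^ k * (U * D ^ k) := by
  have hDU : D * U = 1 - U * D := eq_sub_of_add_eq h
  intro k hk
  induction k with
  | zero => omega
  | succ n ih =>
    rcases Nat.eq_zero_or_pos n with rfl | hn
    · simpa [sub_eq_add_neg] using hDU
    rcases Nat.even_or_odd n with he | ho
    · have h1 : D ^ n * U = U * D ^ n := by
        simpa [Nat.not_odd_iff_even.mpr he, he.neg_one_pow] using ih hn
      rw [pow_succ', mul_assoc, h1, ← mul_assoc, hDU, if_pos he.add_one,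
        (he.add_one).neg_one_pow, Nat.add_sub_cancel, sub_mul, one_mul, mul_assoc, ← pow_succ']
      noncomm_ring
    · have h1 : D ^ n * U = D ^ (n-1) + -(U * D ^ n) := by
        simpa [ho, ho.neg_one_pow] using ih hn
      have h3 : (-1 : A) ^ (n+1) = 1 := (ho.add_one).neg_one_pow
      rw [pow_succ', mul_assoc, h1, mul_add, ← pow_succ', Nat.sub_add_cancel hn, mul_neg,
        ← mul_assoc, hDU, if_neg (Nat.not_odd_iff_even.mpr ho.add_one), h3,
        Nat.add_sub_cancel]
      noncomm_ring

private lemma auxC (U D : A) (s t : ℕ) :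
    Commute ((-1 : A) ^ s * (U * D) + (if Odd s then (1 : A) else 0))
      ((-1 : A) ^ t * (U * D) + (if Odd t then (1 : A) else 0)) := by
  have key : ∀ (n : ℕ) (x : A), Commute x (U * D) →
      Commute x ((-1 : A) ^ n * (U * D) + (if Odd n then (1 : A) else 0)) := by
    intro n x hx
    apply Commute.add_right
    · exact (((Commute.neg_one_left x).pow_left n).symm).mul_right hx
    · split
      · exact Commute.one_right x
      · exact Commute.zero_right x
  exact key t _ ((key s (U * D) (Commute.refl _)).symm)

private lemma hshift (U D : A) (k l : ℕ) :
    ((List.range (l+1)).map (fun j => (-1 : A) ^ (k + 1 + j) * (U * D)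
        + (if Odd (k + 1 + j) then (1 : A) else 0))).prod
    = ((-1 : A) ^ (k + 1) * (U * D) + (if Odd (k + 1) then (1 : A) else 0)) *
      ((List.range l).map (fun j => (-1 : A) ^ (k + 1 + 1 + j) * (U * D)
        + (if Odd (k + 1 + 1 + j) then (1 : A) else 0))).prod := by
  rw [List.range_succ_eq_map, List.map_cons, List.prod_cons, List.map_map]
  simp only [Nat.add_zero, Function.comp_def]
  congr 1
  refine congrArg List.prod (List.map_congr_left fun j _ => ?_)
  have e : k + 1 + (j + 1) = k + 1 + 1 + j := by omega
  simp [e]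

private lemma aux3 (U D : A) (h : D * U + U * D = 1) :
    ∀ l k : ℕ, D ^ l * U ^ (k + l) =
      U ^ k * ((List.range l).map (fun j => (-1 : A) ^ (k + 1 + j) * (U * D)
        + (if Odd (k + 1 + j) then (1 : A) else 0))).prod := by
  intro l
  induction l with
  | zero => intro k; simp
  | succ l ih =>
    intro k
    have e : k + (l + 1) = (k + 1) + l := by omega
    rw [e, pow_succ' D, mul_assoc, ih (k+1), ← mul_assoc,
      aux1 U D h (k+1) (by omega), Nat.add_sub_cancel, hshift, ← mul_assoc (U^k)]
    congr 1
    rw [pow_succ U k]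
    rcases Nat.even_or_odd (k+1) with hp | hp
    · simp only [hp.neg_one_pow, if_neg (Nat.not_odd_iff_even.mpr hp)]
      noncomm_ring
    · simp only [hp.neg_one_pow, if_pos hp]
      noncomm_ring

private lemma aux4 (U D : A) (h : D * U + U * D = 1) :
    ∀ l k : ℕ, D ^ (k + l) * U ^ l =
      ((List.range l).map (fun j => (-1 : A) ^ (k + 1 + j) * (U * D)
        + (if Odd (k + 1 + j) then (1 : A) else 0))).prod * D ^ k := by
  intro l
  induction l with
  | zero => intro k; simp
  | succ l ih =>
    intro k
    have e : k + (l + 1) = (k + 1) + l := by omega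
    have hcom : Commute ((-1 : A) ^ (k+1) * (U * D) + (if Odd (k+1) then (1 : A) else 0))
        (((List.range l).map (fun j => (-1 : A) ^ (k + 1 + 1 + j) * (U * D)
          + (if Odd (k + 1 + 1 + j) then (1 : A) else 0))).prod) := by
      apply Commute.list_prod_right
      intro x hx
      simp only [List.mem_map, List.mem_range] at hx
      obtain ⟨j, _, rfl⟩ := hx
      exact auxC U D _ _
    rw [e, pow_succ U l, ← mul_assoc, ih (k+1), mul_assoc,
      aux2 U D h (k+1) (by omega), Nat.add_sub_cancel, hshift, hcom.eq, mul_assoc]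
    congr 1
    rw [pow_succ' D k]
    rcases Nat.even_or_odd (k+1) with hp | hp
    · simp only [hp.neg_one_pow, if_neg (Nat.not_odd_iff_even.mpr hp)]
      noncomm_ring
    · simp only [hp.neg_one_pow, if_pos hp]
      noncomm_ring

end

/-- Let `A` be an associative unital ring and `U D : A` satisfy
`DU + UD = 1`.  With `ε k = 1` if `k` is odd and `0` if `k` is even, the four
identities of Lemma 2.2 hold, and the factors of the products commute pairwise. -/
theorem statement0 {A : Type*} [Ring A] (U D : A) (h : D * U + U * D = 1) :
    (∀ k : ℕ, 1 ≤ k →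
      D * U ^ k = (if Odd k then (1 : A) else 0) * U ^ (k - 1) + (-1) ^ k * (U ^ k * D)) ∧
    (∀ k : ℕ, 1 ≤ k →
      D ^ k * U = (if Odd k then (1 : A) else 0) * D ^ (k - 1) + (-1) ^ k * (U * D ^ k)) ∧
    (∀ k l : ℕ,
      D ^ l * U ^ (k + l) =
        U ^ k * ((List.range l).map
          (fun j => (-1 : A) ^ (k + 1 + j) * (U * D)
            + (if Odd (k + 1 + j) then (1 : A) else 0))).prod) ∧
    (∀ k l : ℕ,
      D ^ (k + l) * U ^ l =
        ((List.range l).map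
          (fun j => (-1 : A) ^ (k + 1 + j) * (U * D)
            + (if Odd (k + 1 + j) then (1 : A) else 0))).prod * D ^ k) ∧
    (∀ s t : ℕ, Commute ((-1 : A) ^ s * (U * D) + (if Odd s then (1 : A) else 0))
        ((-1 : A) ^ t * (U * D) + (if Odd t then (1 : A) else 0))) := by
  exact ⟨aux1 U D h, aux2 U D h, fun k l => aux3 U D h l k, fun k l => aux4 U D h l k, auxC U D⟩
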